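/- Let X = (X_t)_{t≥0} be a càdlàg process adapted to 𝔽. Then X has an arbitrage in the class S(𝔽) of simple predictable integrands of bounded support if and only if there exist bounded 𝔽-stopping times 0 ≤ τ₀ ≤ τ₁ such that either the strategy 1_{(τ₀,τ₁]} or the strategy −1_{(τ₀,τ₁]} is an arbitrage, i.e., either (X_{τ₁} − X_{τ₀} ≥ 0 a.s. and P(X_{τ₁} − X_{τ₀} > 0) > 0) or (X_{τ₀} − X_{τ₁} ≥ 0 a.s. and P(X_{τ₀} − X_{τ₁} > 0) > 0). -/

import Mathlib

open MeasureTheory ProbabilityTheory Filter Set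
open scoped NNReal ENNReal

variable {Ω : Type*} {m0 : MeasurableSpace Ω}

/-- A simple predictable integrand with bounded support for the filtration `ℱ`:
`H = g₀ 1_{{0}} + ∑_{j=1}^{n-1} g_j 1_{(τ_j, τ_{j+1}]}` with `n ≥ 2`,
`0 ≤ τ₁ ≤ ⋯ ≤ τ_n` stopping times, `τ_n` bounded, and `g_j` being `F_{τ_j}`-measurable. -/
structure SimpleStrategy (ℱ : MeasureTheory.Filtration ℝ≥0 m0) where
  n : ℕ
  two_le : 2 ≤ n
  g0 : ℝ
  τ : ℕ → Ω → ℝ≥0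
  g : ℕ → Ω → ℝ
  stopping : ∀ j, 1 ≤ j → j ≤ n → MeasureTheory.IsStoppingTime ℱ (fun ω => (τ j ω : WithTop ℝ≥0))
  mono : ∀ j, 1 ≤ j → j < n → ∀ ω, τ j ω ≤ τ (j + 1) ω
  bounded : ∃ T : ℝ≥0, ∀ ω, τ n ω ≤ T
  g_meas : ∀ j (h1 : 1 ≤ j) (h2 : j < n),
    Measurable[(stopping j h1 h2.le).measurableSpace] (g j)

/-- terminal gain `(H ⬝ X)_∞ = ∑_{j=1}^{n-1} g_j (X_{τ_{j+1}} - X_{τ_j})`. -/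
def SimpleStrategy.gains {ℱ : MeasureTheory.Filtration ℝ≥0 m0}
    (H : SimpleStrategy ℱ) (X : ℝ≥0 → Ω → ℝ) (ω : Ω) : ℝ :=
  ∑ j ∈ Finset.Ico 1 H.n, H.g j ω * (X (H.τ (j + 1) ω) ω - X (H.τ j ω) ω)

/-- membership in `Sʰ(𝔽)` : the jump times are at least `h` apart. -/
def SimpleStrategy.Spaced {ℱ : MeasureTheory.Filtration ℝ≥0 m0}
    (H : SimpleStrategy ℱ) (h : ℝ≥0) : Prop :=
  ∀ j, 1 ≤ j → j < H.n → ∀ ω, H.τ j ω + h ≤ H.τ (j + 1) ω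

/-- `H` is an arbitrage for `X` under `μ`. -/
def IsArbitrage {ℱ : MeasureTheory.Filtration ℝ≥0 m0} (μ : MeasureTheory.Measure Ω)
    (X : ℝ≥0 → Ω → ℝ) (H : SimpleStrategy ℱ) : Prop :=
  (∀ᵐ ω ∂μ, 0 ≤ H.gains X ω) ∧ 0 < μ {ω | 0 < H.gains X ω}

/-- no arbitrage in the class `S(𝔽)` of simple predictable integrands of bounded support. -/
def NoArbitrageSimple (μ : MeasureTheory.Measure Ω) (ℱ : MeasureTheory.Filtration ℝ≥0 m0)
    (X : ℝ≥0 → Ω → ℝ) : Prop :=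
  ¬ ∃ H : SimpleStrategy ℱ, IsArbitrage μ X H

/-- no arbitrage in the Cheridito class `Π(𝔽) = ⋃_{h>0} Sʰ(𝔽)`. -/
def NoArbitrageCC (μ : MeasureTheory.Measure Ω) (ℱ : MeasureTheory.Filtration ℝ≥0 m0)
    (X : ℝ≥0 → Ω → ℝ) : Prop :=
  ¬ ∃ (h : ℝ≥0) (H : SimpleStrategy ℱ), 0 < h ∧ H.Spaced h ∧ IsArbitrage μ X H

/-- `η ∈ L⁰_{+-}` : `η` is neither a nonnegative r.v. that is positive with positive
probability, nor a nonpositive r.v. that is negative with positive probability. -/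
def MemLzeroPM (μ : MeasureTheory.Measure Ω) (η : Ω → ℝ) : Prop :=
  ¬ ((∀ᵐ ω ∂μ, 0 ≤ η ω) ∧ 0 < μ {ω | 0 < η ω}) ∧
  ¬ ((∀ᵐ ω ∂μ, η ω ≤ 0) ∧ 0 < μ {ω | η ω < 0})

/-- all paths are right continuous with left limits. -/
def IsCadlag (X : ℝ≥0 → Ω → ℝ) : Prop :=
  ∀ ω, (∀ t : ℝ≥0, ContinuousWithinAt (fun s => X s ω) (Set.Ici t) t) ∧
    (∀ t : ℝ≥0, 0 < t →
      ∃ l : ℝ, Filter.Tendsto (fun s => X s ω) (nhdsWithin t (Set.Iio t)) (nhds l))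

/-- a standard Brownian motion w.r.t. the filtration `ℱ`. -/
def IsStandardBM (μ : MeasureTheory.Measure Ω) (ℱ : MeasureTheory.Filtration ℝ≥0 m0)
    (B : ℝ≥0 → Ω → ℝ) : Prop :=
  MeasureTheory.Adapted ℱ B ∧ (∀ ω, B 0 ω = 0) ∧ (∀ ω, Continuous fun t => B t ω) ∧
  ∀ s t : ℝ≥0, s < t →
    ProbabilityTheory.Indep
      (MeasurableSpace.comap (fun ω => B t ω - B s ω) (inferInstance : MeasurableSpace ℝ))
      (ℱ s) μ ∧
    MeasureTheory.Measure.map (fun ω => B t ω - B s ω) μ =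
      ProbabilityTheory.gaussianReal 0 (t - s)


noncomputable def dy (n : ℕ) (t : ℝ≥0) : ℝ≥0 := (⌈t * 2 ^ n⌉₊ : ℝ≥0) / 2 ^ n

lemma dy_mono (n : ℕ) : Monotone (dy n) := by
  intro a b hab
  unfold dy
  gcongr

lemma le_dy (n : ℕ) (t : ℝ≥0) : t ≤ dy n t := by
  rw [dy, le_div_iff₀ (by positivity)]
  exact_mod_cast Nat.le_ceil _

lemma dy_le (n : ℕ) (t : ℝ≥0) : dy n t ≤ t + ((2:ℝ≥0) ^ n)⁻¹ := by
  rw [dy, div_le_iff₀ (by positivity), add_mul,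
    inv_mul_cancel₀ (by positivity : ((2:ℝ≥0)^n) ≠ 0)]
  exact_mod_cast ((Nat.ceil_lt_add_one (by positivity : (0:ℝ≥0) ≤ t * 2 ^ n)).le)

lemma tendsto_dy (t : ℝ≥0) : Tendsto (fun n => dy n t) atTop (nhds t) := by
  have h2 : Tendsto (fun n : ℕ => ((2:ℝ≥0) ^ n)⁻¹) atTop (nhds 0) := by
    have := NNReal.tendsto_pow_atTop_nhds_zero_of_lt_one
      (by rw [NNReal.inv_lt_one_iff] <;> norm_num : (2:ℝ≥0)⁻¹ < 1)
    exact this.congr (fun n => by rw [inv_pow])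
  have h0 : Tendsto (fun n : ℕ => t + ((2:ℝ≥0) ^ n)⁻¹) atTop (nhds (t + 0)) :=
    tendsto_const_nhds.add h2
  rw [add_zero] at h0
  exact tendsto_of_tendsto_of_tendsto_of_le_of_le tendsto_const_nhds h0
    (fun n => le_dy n t) (fun n => dy_le n t)

lemma measurable_comp_countable {α : Type*} {mα : MeasurableSpace α} {e : α → ℝ≥0}
    (he : Measurable[mα] e) (hcount : (Set.range e).Countable) {g : ℝ≥0 → α → ℝ}
    (hg : ∀ v ∈ Set.range e, Measurable[mα] (g v)) : Measurable[mα] fun a => g (e a) a := by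
  intro s hs
  have heq : (fun a => g (e a) a) ⁻¹' s = ⋃ v ∈ Set.range e, (e ⁻¹' {v} ∩ g v ⁻¹' s) := by
    ext a
    simp only [Set.mem_preimage, Set.mem_iUnion, Set.mem_inter_iff, Set.mem_singleton_iff]
    constructor
    · intro h; exact ⟨e a, ⟨a, rfl⟩, rfl, h⟩
    · rintro ⟨v, _, hv, h⟩; rw [hv]; exact h
  rw [heq]
  exact MeasurableSet.biUnion hcount fun v hv => (he (measurableSet_singleton v)).inter (hg v hv hs)

lemma progMeasurable_of_rightContinuous {ℱ : Filtration ℝ≥0 m0} {X : ℝ≥0 → Ω → ℝ}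
    (hX : Adapted ℱ X)
    (hrc : ∀ ω (t : ℝ≥0), ContinuousWithinAt (fun s => X s ω) (Set.Ici t) t) :
    ProgMeasurable ℱ X := by
  intro i
  apply Measurable.stronglyMeasurable
  letI M : MeasurableSpace (Set.Iic i × Ω) := Subtype.instMeasurableSpace.prod (ℱ i)
  refine @measurable_of_tendsto_metrizable _ _ M _ _ _ _
    (fun n (p : Set.Iic i × Ω) => X (min i (dy n (p.1 : ℝ≥0))) p.2) _ (fun n => ?_) ?_
  · -- measurability of each approximation
    refine measurable_comp_countable (mα := M)
      (e := fun p : Set.Iic i × Ω => min i (dy n (p.1 : ℝ≥0)))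
      (g := fun v p => X v p.2) ?_ ?_ ?_
    · exact measurable_const.min ((dy_mono n).measurable.comp
        (measurable_subtype_coe.comp (@measurable_fst _ _ Subtype.instMeasurableSpace (ℱ i))))
    · have : Set.range (fun p : Set.Iic i × Ω => min i (dy n (p.1 : ℝ≥0)))
          ⊆ Set.range (fun k : ℕ => min i ((k : ℝ≥0) / 2 ^ n)) := by
        rintro v ⟨p, rfl⟩
        exact ⟨⌈(p.1 : ℝ≥0) * 2 ^ n⌉₊, rfl⟩
      exact (Set.countable_range _).mono this
    · rintro v ⟨p, rfl⟩
      have hvi : min i (dy n (p.1 : ℝ≥0)) ≤ i := min_le_left _ _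
      exact ((hX _).mono (ℱ.mono hvi) le_rfl).comp
        (@measurable_snd _ _ Subtype.instMeasurableSpace (ℱ i))
  · rw [tendsto_pi_nhds]
    intro p
    have h1 : Tendsto (fun n => min i (dy n (p.1 : ℝ≥0))) atTop (nhds ((p.1 : ℝ≥0))) := by
      have := tendsto_const_nhds (x := i) (f := atTop (α := ℕ)) |>.min (tendsto_dy (p.1 : ℝ≥0))
      rwa [min_eq_right p.1.2] at this
    have h2 : Tendsto (fun n => min i (dy n (p.1 : ℝ≥0))) atTop
        (nhdsWithin (p.1 : ℝ≥0) (Set.Ici (p.1 : ℝ≥0))) := by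
      refine tendsto_nhdsWithin_of_tendsto_nhds_of_eventually_within _ h1 ?_
      exact Filter.Eventually.of_forall (fun n => le_min p.1.2 (le_dy n _))
    exact (hrc p.2 (p.1 : ℝ≥0)).tendsto.comp h2

lemma helper_interval (μ : Measure Ω) (ℱ : Filtration ℝ≥0 m0) (X : ℝ≥0 → Ω → ℝ)
    {τ σ : Ω → ℝ≥0} (hτ : IsStoppingTime ℱ (fun ω => (τ ω : WithTop ℝ≥0))) (hσ : IsStoppingTime ℱ (fun ω => (σ ω : WithTop ℝ≥0)))
    (hle : ∀ ω, τ ω ≤ σ ω) (hbdσ : ∃ T : ℝ≥0, ∀ ω, σ ω ≤ T)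
    {B : Set Ω} (hB : MeasurableSet[hτ.measurableSpace] B)
    (hae : ∀ᵐ ω ∂μ, ω ∈ B → 0 ≤ X (σ ω) ω - X (τ ω) ω)
    (hpos : 0 < μ (B ∩ {ω | 0 < X (σ ω) ω - X (τ ω) ω})) :
    ∃ τ0 τ1 : Ω → ℝ≥0,
      IsStoppingTime ℱ (fun ω => (τ0 ω : WithTop ℝ≥0)) ∧ IsStoppingTime ℱ (fun ω => (τ1 ω : WithTop ℝ≥0)) ∧
      (∃ T : ℝ≥0, ∀ ω, τ0 ω ≤ T) ∧ (∃ T : ℝ≥0, ∀ ω, τ1 ω ≤ T) ∧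
      (∀ ω, τ0 ω ≤ τ1 ω) ∧
      (∀ᵐ ω ∂μ, 0 ≤ X (τ1 ω) ω - X (τ0 ω) ω) ∧
      0 < μ {ω | 0 < X (τ1 ω) ω - X (τ0 ω) ω} := by
  classical
  obtain ⟨T, hT⟩ := hbdσ
  refine ⟨fun ω => if ω ∈ B then τ ω else σ ω, σ, ?_, hσ, ⟨T, ?_⟩, ⟨T, hT⟩, ?_, ?_, ?_⟩
  · -- stopping time
    intro t
    have h1 : MeasurableSet[ℱ t] (B ∩ {ω | (τ ω : WithTop ℝ≥0) ≤ t}) := hB.2 t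
    have hBc : MeasurableSet[hσ.measurableSpace] Bᶜ :=
      (hτ.measurableSpace_mono hσ (fun ω => WithTop.coe_le_coe.mpr (hle ω))) _ hB.compl
    have h2 : MeasurableSet[ℱ t] (Bᶜ ∩ {ω | (σ ω : WithTop ℝ≥0) ≤ t}) := hBc.2 t
    have heq : {ω | ((if ω ∈ B then τ ω else σ ω : ℝ≥0) : WithTop ℝ≥0) ≤ t}
        = (B ∩ {ω | (τ ω : WithTop ℝ≥0) ≤ t}) ∪ (Bᶜ ∩ {ω | (σ ω : WithTop ℝ≥0) ≤ t}) := by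
      ext ω
      by_cases h : ω ∈ B <;> simp [h]
    show MeasurableSet[ℱ t] {ω | ((if ω ∈ B then τ ω else σ ω : ℝ≥0) : WithTop ℝ≥0) ≤ t}
    exact heq ▸ h1.union h2
  · intro ω
    by_cases h : ω ∈ B <;> simp only [h, if_true, if_false]
    exacts [(hle ω).trans (hT ω), hT ω]
  · intro ω
    by_cases h : ω ∈ B <;> simp [h, hle ω]
  · filter_upwards [hae] with ω h
    by_cases hω : ω ∈ B
    · simpa [hω] using h hω
    · simp [hω]
  · refine lt_of_lt_of_le hpos (measure_mono ?_)
    rintro ω ⟨hω, hpos'⟩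
    simpa [Set.mem_setOf_eq, hω] using hpos'

lemma onestep (μ : Measure Ω) (ℱ : Filtration ℝ≥0 m0) (X : ℝ≥0 → Ω → ℝ)
    {τ σ : Ω → ℝ≥0} (hτ : IsStoppingTime ℱ (fun ω => (τ ω : WithTop ℝ≥0))) (hσ : IsStoppingTime ℱ (fun ω => (σ ω : WithTop ℝ≥0)))
    (hle : ∀ ω, τ ω ≤ σ ω) (hbdσ : ∃ T : ℝ≥0, ∀ ω, σ ω ≤ T)
    {ξ : Ω → ℝ} (hξ : Measurable[hτ.measurableSpace] ξ)
    (hae : ∀ᵐ ω ∂μ, 0 ≤ ξ ω * (X (σ ω) ω - X (τ ω) ω))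
    (hpos : 0 < μ {ω | 0 < ξ ω * (X (σ ω) ω - X (τ ω) ω)}) :
    ∃ τ0 τ1 : Ω → ℝ≥0,
      IsStoppingTime ℱ (fun ω => (τ0 ω : WithTop ℝ≥0)) ∧ IsStoppingTime ℱ (fun ω => (τ1 ω : WithTop ℝ≥0)) ∧
      (∃ T : ℝ≥0, ∀ ω, τ0 ω ≤ T) ∧ (∃ T : ℝ≥0, ∀ ω, τ1 ω ≤ T) ∧
      (∀ ω, τ0 ω ≤ τ1 ω) ∧
      (((∀ᵐ ω ∂μ, 0 ≤ X (τ1 ω) ω - X (τ0 ω) ω) ∧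
          0 < μ {ω | 0 < X (τ1 ω) ω - X (τ0 ω) ω}) ∨
        ((∀ᵐ ω ∂μ, 0 ≤ X (τ0 ω) ω - X (τ1 ω) ω) ∧
          0 < μ {ω | 0 < X (τ0 ω) ω - X (τ1 ω) ω})) := by
  set S := {ω | 0 < ξ ω * (X (σ ω) ω - X (τ ω) ω)} with hS
  have hsplit : 0 < μ (S ∩ {ω | 0 < ξ ω}) ∨ 0 < μ (S ∩ {ω | ξ ω < 0}) := by
    by_contra h
    push_neg at h
    obtain ⟨h1, h2⟩ := h
    rw [le_zero_iff] at h1 h2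
    have hsub : S ⊆ (S ∩ {ω | 0 < ξ ω}) ∪ (S ∩ {ω | ξ ω < 0}) := by
      intro ω hω
      rcases lt_trichotomy (ξ ω) 0 with h | h | h
      · exact Or.inr ⟨hω, h⟩
      · exfalso
        have h0 : (0:ℝ) < ξ ω * (X (σ ω) ω - X (τ ω) ω) := hω
        rw [h, zero_mul] at h0
        exact lt_irrefl 0 h0
      · exact Or.inl ⟨hω, h⟩
    have : μ S ≤ μ (S ∩ {ω | 0 < ξ ω}) + μ (S ∩ {ω | ξ ω < 0}) :=
      (measure_mono hsub).trans (measure_union_le _ _)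
    rw [h1, h2, add_zero] at this
    exact absurd (le_antisymm this zero_le) (ne_of_gt hpos)
  rcases hsplit with h | h
  · -- long position on B = {0 < ξ}
    have hB : MeasurableSet[hτ.measurableSpace] {ω | 0 < ξ ω} := by
      have : {ω | 0 < ξ ω} = ξ ⁻¹' Set.Ioi 0 := rfl
      rw [this]; exact hξ measurableSet_Ioi
    obtain ⟨τ0, τ1, h1, h2, h3, h4, h5, h6, h7⟩ :=
      helper_interval μ ℱ X hτ hσ hle hbdσ hB
        (by
          filter_upwards [hae] with ω hω hmem
          by_contra hneg
          push_neg at hneg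
          exact absurd hω (not_le.mpr (mul_neg_of_pos_of_neg hmem hneg)))
        (by
          refine lt_of_lt_of_le h (measure_mono ?_)
          rintro ω ⟨hω1, hω2⟩
          have h0 : (0:ℝ) < ξ ω * (X (σ ω) ω - X (τ ω) ω) := hω1
          have h2 : (0:ℝ) < ξ ω := hω2
          refine ⟨hω2, ?_⟩
          show (0:ℝ) < X (σ ω) ω - X (τ ω) ω
          nlinarith)
    exact ⟨τ0, τ1, h1, h2, h3, h4, h5, Or.inl ⟨h6, h7⟩⟩
  · -- short position on B = {ξ < 0}, apply helper to -X
    have hB : MeasurableSet[hτ.measurableSpace] {ω | ξ ω < 0} := by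
      have : {ω | ξ ω < 0} = ξ ⁻¹' Set.Iio 0 := rfl
      rw [this]; exact hξ measurableSet_Iio
    obtain ⟨τ0, τ1, h1, h2, h3, h4, h5, h6, h7⟩ :=
      helper_interval μ ℱ (fun t ω => -(X t ω)) hτ hσ hle hbdσ hB
        (by
          filter_upwards [hae] with ω hω hmem
          have h2 : ξ ω < 0 := hmem
          show (0:ℝ) ≤ -X (σ ω) ω - -X (τ ω) ω
          nlinarith)
        (by
          refine lt_of_lt_of_le h (measure_mono ?_)
          rintro ω ⟨hω1, hω2⟩
          have h0 : (0:ℝ) < ξ ω * (X (σ ω) ω - X (τ ω) ω) := hω1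
          have h2 : ξ ω < 0 := hω2
          refine ⟨hω2, ?_⟩
          show (0:ℝ) < -X (σ ω) ω - -X (τ ω) ω
          nlinarith)
    refine ⟨τ0, τ1, h1, h2, h3, h4, h5, Or.inr ⟨?_, ?_⟩⟩
    · filter_upwards [h6] with ω hω
      have h' : (0:ℝ) ≤ -X (τ1 ω) ω - -X (τ0 ω) ω := hω
      linarith
    · refine lt_of_lt_of_le h7 (measure_mono ?_)
      intro ω hω
      have h' : (0:ℝ) < -X (τ1 ω) ω - -X (τ0 ω) ω := hω
      show (0:ℝ) < X (τ0 ω) ω - X (τ1 ω) ω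
      linarith

lemma SimpleStrategy.tau_mono {ℱ : MeasureTheory.Filtration ℝ≥0 m0} (H : SimpleStrategy ℱ)
    {i j : ℕ} (h1 : 1 ≤ i) (hij : i ≤ j) (hj : j ≤ H.n) (ω : Ω) : H.τ i ω ≤ H.τ j ω := by
  induction j, hij using Nat.le_induction with
  | base => exact le_rfl
  | succ m him ih =>
      exact (ih (by omega)).trans (H.mono m (by omega) (by omega) ω)

lemma gains_pair {ℱ : MeasureTheory.Filtration ℝ≥0 m0} (τ0 τ1 : Ω → ℝ≥0)
    (hτ0 : MeasureTheory.IsStoppingTime ℱ (fun ω => (τ0 ω : WithTop ℝ≥0))) (hτ1 : MeasureTheory.IsStoppingTime ℱ (fun ω => (τ1 ω : WithTop ℝ≥0)))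
    (hT1 : ∃ T : ℝ≥0, ∀ ω, τ1 ω ≤ T) (hle : ∀ ω, τ0 ω ≤ τ1 ω) (c : ℝ) :
    ∃ H : SimpleStrategy ℱ, ∀ (X : ℝ≥0 → Ω → ℝ) ω,
      H.gains X ω = c * (X (τ1 ω) ω - X (τ0 ω) ω) := by
  classical
  obtain ⟨T, hT⟩ := hT1
  refine ⟨{ n := 2, two_le := le_rfl, g0 := 0,
            τ := fun j ω => if j ≤ 1 then τ0 ω else τ1 ω,
            g := fun j _ => if j = 1 then c else 0,
            stopping := ?_, mono := ?_, bounded := ?_, g_meas := ?_ }, ?_⟩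
  · intro j h1 h2
    interval_cases j
    · simpa using hτ0
    · simpa using hτ1
  · intro j h1 h2 ω
    interval_cases j
    simpa using hle ω
  · exact ⟨T, fun ω => by simpa using hT ω⟩
  · intro j h1 h2
    exact measurable_const
  · intro X ω
    show (∑ j ∈ Finset.Ico 1 2, _) = _
    rw [show Finset.Ico 1 2 = {1} from rfl, Finset.sum_singleton]
    norm_num

theorem forward_dir (μ : MeasureTheory.Measure Ω) [MeasureTheory.IsProbabilityMeasure μ]
    (ℱ : MeasureTheory.Filtration ℝ≥0 m0)
    (X : ℝ≥0 → Ω → ℝ) (hadapted : MeasureTheory.Adapted ℱ X) (hcadlag : IsCadlag X)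
    (H : SimpleStrategy ℱ) (harb : IsArbitrage μ X H) :
    ∃ τ0 τ1 : Ω → ℝ≥0,
      MeasureTheory.IsStoppingTime ℱ (fun ω => (τ0 ω : WithTop ℝ≥0)) ∧ MeasureTheory.IsStoppingTime ℱ (fun ω => (τ1 ω : WithTop ℝ≥0)) ∧
      (∃ T : ℝ≥0, ∀ ω, τ0 ω ≤ T) ∧ (∃ T : ℝ≥0, ∀ ω, τ1 ω ≤ T) ∧
      (∀ ω, τ0 ω ≤ τ1 ω) ∧
      (((∀ᵐ ω ∂μ, 0 ≤ X (τ1 ω) ω - X (τ0 ω) ω) ∧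
          0 < μ {ω | 0 < X (τ1 ω) ω - X (τ0 ω) ω}) ∨
        ((∀ᵐ ω ∂μ, 0 ≤ X (τ0 ω) ω - X (τ1 ω) ω) ∧
          0 < μ {ω | 0 < X (τ0 ω) ω - X (τ1 ω) ω})) := by
  classical
  set V : ℕ → Ω → ℝ :=
    fun k ω => ∑ j ∈ Finset.Ico 1 k, H.g j ω * (X (H.τ (j + 1) ω) ω - X (H.τ j ω) ω) with hV
  have hPn : (∀ᵐ ω ∂μ, 0 ≤ V H.n ω) ∧ 0 < μ {ω | 0 < V H.n ω} := harb
  have hex : ∃ k, (∀ᵐ ω ∂μ, 0 ≤ V k ω) ∧ 0 < μ {ω | 0 < V k ω} := ⟨H.n, hPn⟩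
  obtain ⟨htae, htpos⟩ := Nat.find_spec hex
  set t := Nat.find hex with ht_def
  have hmin : ∀ m, m < t → ¬ ((∀ᵐ ω ∂μ, 0 ≤ V m ω) ∧ 0 < μ {ω | 0 < V m ω}) :=
    fun m hm => Nat.find_min hex hm
  have ht_le : t ≤ H.n := Nat.find_min' hex hPn
  have h2t : 2 ≤ t := by
    by_contra hlt
    push_neg at hlt
    have hIco : Finset.Ico 1 t = ∅ := Finset.Ico_eq_empty (by omega)
    have hempty : {ω | 0 < V t ω} = ∅ := by
      ext ω
      simp [hV, hIco]
    rw [hempty] at htpos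
    simp at htpos
  obtain ⟨k, hkt⟩ : ∃ k, t = k + 1 := ⟨t - 1, by omega⟩
  have hk1 : 1 ≤ k := by omega
  have hkn : k < H.n := by omega
  have hτk : MeasureTheory.IsStoppingTime ℱ (fun ω => (H.τ k ω : WithTop ℝ≥0)) := H.stopping k hk1 hkn.le
  have hτk1 : MeasureTheory.IsStoppingTime ℱ (fun ω => (H.τ (k + 1) ω : WithTop ℝ≥0)) := H.stopping (k + 1) (by omega) hkn
  have hlek : ∀ ω, H.τ k ω ≤ H.τ (k + 1) ω := H.mono k hk1 hkn
  obtain ⟨T, hT⟩ := H.bounded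
  have hbd : ∃ T : ℝ≥0, ∀ ω, H.τ (k + 1) ω ≤ T :=
    ⟨T, fun ω => (H.tau_mono (by omega) hkn le_rfl ω).trans (hT ω)⟩
  have hprog : ProgMeasurable ℱ X :=
    progMeasurable_of_rightContinuous hadapted (fun ω t => (hcadlag ω).1 t)
  have hVmeas : Measurable[hτk.measurableSpace] (V k) := by
    simp only [hV]
    apply Finset.measurable_sum
    intro j hj
    rw [Finset.mem_Ico] at hj
    obtain ⟨hj1, hjk⟩ := hj
    have hτj : MeasureTheory.IsStoppingTime ℱ (fun ω => (H.τ j ω : WithTop ℝ≥0)) := H.stopping j hj1 (by omega)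
    have hτj1 : MeasureTheory.IsStoppingTime ℱ (fun ω => (H.τ (j + 1) ω : WithTop ℝ≥0)) := H.stopping (j + 1) (by omega) (by omega)
    have hmono_j : hτj.measurableSpace ≤ hτk.measurableSpace :=
      hτj.measurableSpace_mono hτk (fun ω => WithTop.coe_le_coe.mpr (H.tau_mono hj1 hjk.le hkn.le ω))
    have hmono_j1 : hτj1.measurableSpace ≤ hτk.measurableSpace :=
      hτj1.measurableSpace_mono hτk (fun ω => WithTop.coe_le_coe.mpr (H.tau_mono (by omega) hjk hkn.le ω))
    have hg : Measurable[hτk.measurableSpace] (H.g j) :=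
      (H.g_meas j hj1 (by omega)).mono hmono_j le_rfl
    have hX1 : Measurable[hτk.measurableSpace] (fun ω => X (H.τ (j + 1) ω) ω) :=
      (measurable_stoppedValue hprog hτj1).mono hmono_j1 le_rfl
    have hX2 : Measurable[hτk.measurableSpace] (fun ω => X (H.τ j ω) ω) :=
      (measurable_stoppedValue hprog hτj).mono hmono_j le_rfl
    exact hg.mul (hX1.sub hX2)
  have hstep : ∀ ω, V (k + 1) ω
      = V k ω + H.g k ω * (X (H.τ (k + 1) ω) ω - X (H.τ k ω) ω) := by
    intro ω
    simp only [hV]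
    rw [Finset.sum_Ico_succ_top hk1]
  have hgmeas : Measurable[hτk.measurableSpace] (H.g k) := H.g_meas k hk1 hkn
  by_cases hA : μ {ω | V k ω < 0} = 0
  · -- V k = 0 a.e., use ξ = g k
    have hae0 : ∀ᵐ ω ∂μ, 0 ≤ V k ω := by
      rw [ae_iff]
      convert hA using 2
      ext ω
      simp [not_le]
    have hnk := hmin k (by omega)
    have hpos0 : μ {ω | 0 < V k ω} = 0 := by
      by_contra hne
      exact hnk ⟨hae0, zero_lt_iff.mpr hne⟩
    have haele : ∀ᵐ ω ∂μ, V k ω ≤ 0 := by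
      rw [ae_iff]
      convert hpos0 using 2
      ext ω
      simp [not_le]
    have haeeq : ∀ᵐ ω ∂μ, V k ω = 0 := by
      filter_upwards [hae0, haele] with ω h1 h2
      linarith
    have hae' : ∀ᵐ ω ∂μ, 0 ≤ H.g k ω * (X (H.τ (k + 1) ω) ω - X (H.τ k ω) ω) := by
      filter_upwards [htae, haeeq] with ω h1 h2
      rw [hkt] at h1
      rw [hstep ω, h2, zero_add] at h1
      exact h1
    have hpos' : 0 < μ {ω | 0 < H.g k ω * (X (H.τ (k + 1) ω) ω - X (H.τ k ω) ω)} := by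
      refine lt_of_lt_of_le (hkt ▸ htpos) (measure_mono_ae ?_)
      filter_upwards [haeeq] with ω h2
      intro hmem
      have h0 : (0:ℝ) < V (k + 1) ω := hmem
      rw [hstep ω, h2, zero_add] at h0
      exact h0
    exact onestep μ ℱ X hτk hτk1 hlek hbd hgmeas hae' hpos'
  · -- short/long on A = {V k < 0}
    have hApos : 0 < μ {ω | V k ω < 0} := zero_lt_iff.mpr hA
    set ξ : Ω → ℝ := Set.indicator {ω | V k ω < 0} (H.g k) with hξ
    have hAmeas : MeasurableSet[hτk.measurableSpace] {ω | V k ω < 0} := by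
      have hpre : {ω | V k ω < 0} = V k ⁻¹' Set.Iio 0 := rfl
      rw [hpre]
      exact hVmeas measurableSet_Iio
    have hξmeas : Measurable[hτk.measurableSpace] ξ := hgmeas.indicator hAmeas
    have haeA : ∀ᵐ ω ∂μ, ω ∈ {ω | V k ω < 0} →
        0 < ξ ω * (X (H.τ (k + 1) ω) ω - X (H.τ k ω) ω) := by
      filter_upwards [htae] with ω h1 hmem
      have hv : V k ω < 0 := hmem
      rw [hkt] at h1
      rw [hstep ω] at h1
      have hξω : ξ ω = H.g k ω := Set.indicator_of_mem (s := {ω | V k ω < 0}) (a := ω) hmem (H.g k)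
      rw [hξω]
      linarith
    have hae' : ∀ᵐ ω ∂μ, 0 ≤ ξ ω * (X (H.τ (k + 1) ω) ω - X (H.τ k ω) ω) := by
      filter_upwards [haeA] with ω h
      by_cases hmem : ω ∈ {ω | V k ω < 0}
      · exact (h hmem).le
      · have hξω : ξ ω = 0 := Set.indicator_of_notMem (s := {ω | V k ω < 0}) (a := ω) hmem (H.g k)
        rw [hξω, zero_mul]
    have hpos' : 0 < μ {ω | 0 < ξ ω * (X (H.τ (k + 1) ω) ω - X (H.τ k ω) ω)} := by
      refine lt_of_lt_of_le hApos (measure_mono_ae ?_)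
      filter_upwards [haeA] with ω h
      exact h
    exact onestep μ ℱ X hτk hτk1 hlek hbd hξmeas hae' hpos'


/-- **Corollary 6.** A càdlàg adapted process `X` has an arbitrage in `S(𝔽)` iff there
are bounded stopping times `τ₀ ≤ τ₁` such that `1_{(τ₀,τ₁]}` or `-1_{(τ₀,τ₁]}` is an
arbitrage. -/
theorem stmt11 (μ : MeasureTheory.Measure Ω) [MeasureTheory.IsProbabilityMeasure μ]
    (ℱ : MeasureTheory.Filtration ℝ≥0 m0)
    (X : ℝ≥0 → Ω → ℝ) (hadapted : MeasureTheory.Adapted ℱ X) (hcadlag : IsCadlag X) :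
    (∃ H : SimpleStrategy ℱ, IsArbitrage μ X H) ↔
      ∃ τ0 τ1 : Ω → ℝ≥0,
        MeasureTheory.IsStoppingTime ℱ (fun ω => (τ0 ω : WithTop ℝ≥0)) ∧ MeasureTheory.IsStoppingTime ℱ (fun ω => (τ1 ω : WithTop ℝ≥0)) ∧
        (∃ T : ℝ≥0, ∀ ω, τ0 ω ≤ T) ∧ (∃ T : ℝ≥0, ∀ ω, τ1 ω ≤ T) ∧
        (∀ ω, τ0 ω ≤ τ1 ω) ∧
        (((∀ᵐ ω ∂μ, 0 ≤ X (τ1 ω) ω - X (τ0 ω) ω) ∧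
            0 < μ {ω | 0 < X (τ1 ω) ω - X (τ0 ω) ω}) ∨
          ((∀ᵐ ω ∂μ, 0 ≤ X (τ0 ω) ω - X (τ1 ω) ω) ∧
            0 < μ {ω | 0 < X (τ0 ω) ω - X (τ1 ω) ω})) := by
  constructor
  · rintro ⟨H, harb⟩
    exact forward_dir μ ℱ X hadapted hcadlag H harb
  · rintro ⟨τ0, τ1, hτ0, hτ1, hb0, hb1, hle, hcase⟩
    rcases hcase with h | h
    · obtain ⟨H, hH⟩ := gains_pair τ0 τ1 hτ0 hτ1 hb1 hle 1
      refine ⟨H, ?_, ?_⟩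
      · filter_upwards [h.1] with ω hω
        rw [hH X ω, one_mul]
        exact hω
      · refine lt_of_lt_of_le h.2 (measure_mono ?_)
        intro ω hω
        have hω' : (0:ℝ) < X (τ1 ω) ω - X (τ0 ω) ω := hω
        show 0 < H.gains X ω
        rw [hH X ω, one_mul]
        exact hω'
    · obtain ⟨H, hH⟩ := gains_pair τ0 τ1 hτ0 hτ1 hb1 hle (-1)
      refine ⟨H, ?_, ?_⟩
      · filter_upwards [h.1] with ω hω
        rw [hH X ω]
        linarith
      · refine lt_of_lt_of_le h.2 (measure_mono ?_)
        intro ω hω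
        have hω' : (0:ℝ) < X (τ0 ω) ω - X (τ1 ω) ω := hω
        show 0 < H.gains X ω
        rw [hH X ω]
        linarith
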